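/- Let L₁,…,L_ℓ be d×d matrices diagonal in an orthonormal basis (e_i), η_k ∈ [0,1], and for a density matrix ρ define f(ρ) := 4 Σ_k Σ_i η_k ( Re(L_k)_{ii} − R_k(ρ) )² ρ_{ii}², where R_k(ρ) = Σ_i Re(L_k)_{ii} ρ_{ii}. Assume the identifiability condition: for all i ≠ j there is k with η_k > 0 and Re(L_k)_{ii} ≠ Re(L_k)_{jj}. Then f(ρ) = 0 if and only if ρ_{ii} ρ_{jj} = 0 for all i ≠ j together with ρ being a density matrix forces ρ's diagonal to be a standard basis vector; in particular, if moreover ρ is diagonal, f(ρ) = 0 iff ρ = E_{i,i} for some i. -/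

import Mathlib

open Matrix
open scoped ComplexOrder

/-- Under the identifiability condition, the diagonal noise intensity
`f(ρ) = 4 Σ_k Σ_i η_k (Re (L_k)_{ii} − R_k(ρ))² ρ_{ii}²` vanishes exactly on states
whose diagonal is a standard basis vector; in particular a diagonal density matrix `ρ`
satisfies `f(ρ) = 0` iff `ρ = E_{i,i}` for some `i`. -/
theorem noise_vanishes_iff_pointer_state
    {d ℓ : ℕ} (Lm : Fin ℓ → Matrix (Fin d) (Fin d) ℂ) (η : Fin ℓ → ℝ)
    (hLdiag : ∀ k, (Lm k).IsDiag) (hη : ∀ k, η k ∈ Set.Icc (0:ℝ) 1)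
    (hident : ∀ i j : Fin d, i ≠ j →
      ∃ k, 0 < η k ∧ (Lm k i i).re ≠ (Lm k j j).re)
    (ρ : Matrix (Fin d) (Fin d) ℂ) (hρpos : ρ.PosSemidef) (hρtr : ρ.trace = 1)
    (f : Matrix (Fin d) (Fin d) ℂ → ℝ)
    (hf : ∀ σ : Matrix (Fin d) (Fin d) ℂ, f σ =
      4 * ∑ k, ∑ i, η k * ((Lm k i i).re - ∑ j, (Lm k j j).re * (σ j j).re)^2
        * ((σ i i).re)^2) :
    (f ρ = 0 ↔ ∃ i, ∀ j, ρ j j = if j = i then 1 else 0) ∧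
    (ρ.IsDiag → (f ρ = 0 ↔ ∃ i, ρ = Matrix.single i i 1)) := by
  -- diagonal entries are nonnegative reals
  have hdiag : ∀ i, 0 ≤ (ρ i i).re ∧ (ρ i i).im = 0 := by
    intro i
    have := hρpos.dotProduct_mulVec_nonneg (Pi.single i 1)
    simp [dotProduct, Matrix.mulVec, Pi.single_apply, Complex.le_def] at this
    exact ⟨this.1, this.2.symm⟩
  set p : Fin d → ℝ := fun i => (ρ i i).re with hp
  have hpnn : ∀ i, 0 ≤ p i := fun i => (hdiag i).1
  have hdiagval : ∀ i, ρ i i = (p i : ℂ) := by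
    intro i
    exact Complex.ext (by simp [p]) (by simp [(hdiag i).2])
  have hsum : ∑ i, p i = 1 := by
    have : (ρ.trace).re = 1 := by rw [hρtr]; simp
    simpa [Matrix.trace, Matrix.diag, Complex.re_sum, p] using this
  -- the main equivalence
  have hmain : f ρ = 0 ↔ ∃ i, ∀ j, ρ j j = if j = i then 1 else 0 := by
    constructor
    · intro h0
      rw [hf] at h0
      have hterm : ∀ k i, η k * ((Lm k i i).re - ∑ j, (Lm k j j).re * p j)^2 * (p i)^2 = 0 := by
        have h4 : (∑ k, ∑ i, η k * ((Lm k i i).re - ∑ j, (Lm k j j).re * (ρ j j).re)^2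
            * ((ρ i i).re)^2) = 0 := by linarith
        have hnn : ∀ k ∈ Finset.univ, (0:ℝ) ≤ ∑ i, η k * ((Lm k i i).re - ∑ j, (Lm k j j).re * (ρ j j).re)^2 * ((ρ i i).re)^2 := by
          intro k _
          apply Finset.sum_nonneg
          intro i _
          have := (hη k).1
          positivity
        intro k i
        have hk := (Finset.sum_eq_zero_iff_of_nonneg hnn).mp h4 k (Finset.mem_univ k)
        have hnn2 : ∀ i ∈ Finset.univ, (0:ℝ) ≤ η k * ((Lm k i i).re - ∑ j, (Lm k j j).re * (ρ j j).re)^2 * ((ρ i i).re)^2 := by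
          intro i _
          have := (hη k).1
          positivity
        exact (Finset.sum_eq_zero_iff_of_nonneg hnn2).mp hk i (Finset.mem_univ i)
      -- key: if p i > 0, then for any k with η k > 0, (Lm k i i).re = R_k
      have hkey : ∀ i, 0 < p i → ∀ k, 0 < η k →
          (Lm k i i).re = ∑ j, (Lm k j j).re * p j := by
        intro i hi k hk
        have := hterm k i
        have hpi : (p i)^2 ≠ 0 := pow_ne_zero _ (ne_of_gt hi)
        have hsq : ((Lm k i i).re - ∑ j, (Lm k j j).re * p j)^2 = 0 := by
          rcases mul_eq_zero.mp this with h | h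
          · rcases mul_eq_zero.mp h with h | h
            · exact absurd h (ne_of_gt hk)
            · exact h
          · exact absurd h hpi
        have := pow_eq_zero_iff (n := 2) (by norm_num) |>.mp hsq
        linarith
      -- there is some i with p i > 0
      have hex : ∃ i, 0 < p i := by
        by_contra hc
        push_neg at hc
        have : ∑ i, p i = 0 := Finset.sum_eq_zero fun i _ => le_antisymm (hc i) (hpnn i)
        rw [hsum] at this; norm_num at this
      obtain ⟨i, hi⟩ := hex
      refine ⟨i, fun j => ?_⟩
      have hzero : ∀ j, j ≠ i → p j = 0 := by
        intro j hj
        by_contra hjne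
        have hjpos : 0 < p j := lt_of_le_of_ne (hpnn j) (Ne.symm hjne)
        obtain ⟨k, hk, hne⟩ := hident j i hj
        exact hne ((hkey j hjpos k hk).trans (hkey i hi k hk).symm)
      by_cases hji : j = i
      · subst hji
        have : p j = 1 := by
          have := Finset.sum_eq_sum_sdiff_singleton_add (Finset.mem_univ j) p
          have hrest : ∑ x ∈ Finset.univ \ {j}, p x = 0 := by
            apply Finset.sum_eq_zero
            intro x hx
            simp only [Finset.mem_sdiff, Finset.mem_singleton] at hx
            exact hzero x hx.2
          rw [hsum, hrest] at this
          linarith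
        simp [hdiagval j, this]
      · simp [hji, hdiagval j, hzero j hji]
    · rintro ⟨i, hi⟩ 
      rw [hf]
      have hpval : ∀ j, p j = if j = i then 1 else 0 := by
        intro j
        have := hi j
        rw [hdiagval j] at this
        by_cases hji : j = i <;> simp [hji] at this ⊢ <;> exact this
      have hR : ∀ k, ∑ j, (Lm k j j).re * p j = (Lm k i i).re := by
        intro k
        rw [Finset.sum_eq_single i]
        · simp [hpval i]
        · intro b _ hb; simp [hpval b, hb]
        · simp
      have : ∀ k, ∑ j, η k * ((Lm k j j).re - ∑ m, (Lm k m m).re * p m)^2 * (p j)^2 = 0 := by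
        intro k
        apply Finset.sum_eq_zero
        intro j _
        by_cases hji : j = i
        · subst hji; rw [hR k]; ring
        · simp [hpval j, hji]
      simp only [p] at this
      rw [Finset.sum_eq_zero fun k _ => this k]
      ring
  refine ⟨hmain, fun hρdiag => ?_⟩
  rw [hmain]
  constructor
  · rintro ⟨i, hi⟩
    refine ⟨i, ?_⟩
    ext a b
    by_cases hab : a = b
    · subst hab
      rw [hi a]
      by_cases hai : a = i
      · simp [hai, Matrix.single]
      · have hia : i ≠ a := fun h => hai h.symm
        simp [Matrix.single, hia, hai]
    · rw [hρdiag hab]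
      simp [Matrix.single]
      exact fun h1 h2 => hab (h1.symm.trans h2)
  · rintro ⟨i, rfl⟩
    refine ⟨i, fun j => ?_⟩
    by_cases hji : j = i
    · simp [hji, Matrix.single]
    · have hij : i ≠ j := fun h => hji h.symm
      simp [Matrix.single, hij, hji]
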